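/- Let T = (V, E) be a rootless directed tree with finite branching index (there is a smallest m ≥ 0 such that Chi^⟨k⟩(V_≺) ∩ V_≺ = ∅ for all k ≥ m) and nonempty set V_≺ of branching vertices. Then there exists a unique vertex ω ∈ V_≺ such that card(Chi(par^⟨k⟩(ω))) = 1 for all integers k ≥ 1. -/

import Mathlib

open scoped InnerProductSpace ENNReal

/-- A directed graph on a vertex set `V`: a set of edges with no loops. -/
structure DirectedGraph (V : Type*) where
  E : Set (V × V)
  not_loop : ∀ v : V, (v, v) ∉ E

namespace DirectedGraph

variable {V : Type*} (G : DirectedGraph V)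

/-- undirected adjacency -/
def Adj (u v : V) : Prop := (u, v) ∈ G.E ∨ (v, u) ∈ G.E

/-- `G` has a circuit: a finite sequence of `n ≥ 2` distinct vertices, consecutively
joined by edges, with an edge from the last back to the first. -/
def HasCircuit : Prop :=
  ∃ (n : ℕ) (f : ℕ → V), 2 ≤ n ∧
    (∀ i j, i < n → j < n → f i = f j → i = j) ∧
    (∀ i, i + 1 < n → (f i, f (i + 1)) ∈ G.E) ∧ (f (n - 1), f 0) ∈ G.E

/-- `G` is connected: any two distinct vertices are joined by a finite undirected path. -/
def Connected : Prop :=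
  ∀ u v : V, u ≠ v → ∃ (n : ℕ) (f : ℕ → V), 2 ≤ n ∧ f 0 = u ∧ f (n - 1) = v ∧
    ∀ i, i + 1 < n → G.Adj (f i) (f (i + 1))

/-- `v` is a root: no edge ends at `v`. -/
def IsRoot (v : V) : Prop := ∀ u : V, (u, v) ∉ G.E

/-- `G` is a directed tree: it has no circuits, is connected, and every non-root
vertex has a unique parent. -/
def IsDirectedTree : Prop :=
  ¬ G.HasCircuit ∧ G.Connected ∧ ∀ v : V, ¬ G.IsRoot v → ∃! u : V, (u, v) ∈ G.E

/-- the set of children of a vertex -/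
def chi (u : V) : Set V := {v | (u, v) ∈ G.E}

/-- the children of a set of vertices -/
def chiSet (W : Set V) : Set V := {v | ∃ u ∈ W, (u, v) ∈ G.E}

/-- the `n`-th generation of descendants of a set of vertices -/
def chiIter (n : ℕ) (W : Set V) : Set V := (G.chiSet)^[n] W

/-- the set of branching vertices: vertices with at least two children -/
def Vprec : Set V := {u | ∃ a b : V, a ∈ G.chi u ∧ b ∈ G.chi u ∧ a ≠ b}

/-- `G` is leafless: every vertex has at least one child. -/
def Leafless : Prop := ∀ u : V, (G.chi u).Nonempty

/-- `par` is a parent function for `G`: it sends every non-root vertex to its parent. -/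
def IsParentFun (par : V → V) : Prop := ∀ v : V, ¬ G.IsRoot v → (par v, v) ∈ G.E

end DirectedGraph

section Shift

open scoped Classical

variable {V : Type*}

/-- the Hilbert space `ℓ²(V)` -/
noncomputable abbrev l2 (V : Type*) := lp (fun _ : V => ℂ) 2

/-- the standard orthonormal basis vector `e_u` of `ℓ²(V)` -/
noncomputable def evec (u : V) : l2 V := lp.single 2 u 1

/-- `S` is the weighted shift on the directed tree `G` with weights `w`, characterized by
its matrix entries: `⟪S e_u, e_v⟫ = w v` if `v` is a child of `u`, and `0` otherwise
(equivalently, `S e_u = ∑_{v ∈ Chi(u)} w v • e_v`). -/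
noncomputable def IsWeightedShift (G : DirectedGraph V) (w : V → ℝ) (S : l2 V →L[ℂ] l2 V) : Prop :=
  ∀ u v : V, ⟪S (evec u), evec v⟫_ℂ = if (u, v) ∈ G.E then (w v : ℂ) else 0

end Shift

/-- Let `G` be a rootless directed tree with finite branching index
(there is `m` with `Chi^⟨k⟩(V_≺) ∩ V_≺ = ∅` for all `k ≥ m`) and nonempty set `V_≺`
of branching vertices. Then there is a unique vertex `ω ∈ V_≺` (the generalized root)
such that `card (Chi (par^⟨k⟩ ω)) = 1` for all `k ≥ 1`. -/
theorem exists_unique_generalized_root {V : Type*} (G : DirectedGraph V)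
    (htree : G.IsDirectedTree) (hrootless : ∀ v : V, ¬ G.IsRoot v)
    (par : V → V) (hpar : ∀ v : V, (par v, v) ∈ G.E)
    (hfin : ∃ m : ℕ, ∀ k : ℕ, m ≤ k → G.chiIter k G.Vprec ∩ G.Vprec = ∅)
    (hne : G.Vprec.Nonempty) :
    ∃! ω : V, ω ∈ G.Vprec ∧ ∀ k : ℕ, 1 ≤ k → ∃! c : V, c ∈ G.chi (par^[k] ω) := by
  classical
  obtain ⟨hnoc, hconn, huniq⟩ := htree
  obtain ⟨m, hm⟩ := hfin
  -- every edge into b comes from par b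
  have hparu : ∀ a b : V, (a, b) ∈ G.E → a = par b := by
    intro a b hab
    have hnb : ¬ G.IsRoot b := fun hr => hr a hab
    obtain ⟨u, hu, huu⟩ := huniq b hnb
    rw [huu a hab, huu (par b) (hpar b)]
  -- descendant lemma
  have hdesc : ∀ (k : ℕ) (v : V), par^[k] v ∈ G.Vprec → v ∈ G.chiIter k G.Vprec := by
    intro k
    induction k with
    | zero => intro v h; exact h
    | succ k ih =>
      intro v h
      have h1 : par v ∈ G.chiIter k G.Vprec := ih (par v) (by
        rwa [← Function.iterate_succ_apply])
      show v ∈ (G.chiSet)^[k+1] G.Vprec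
      rw [Function.iterate_succ_apply']
      exact ⟨par v, h1, hpar v⟩
  -- a vertex not in Vprec has at most one child
  have hone : ∀ u : V, u ∉ G.Vprec → ∀ c c' : V, c ∈ G.chi u → c' ∈ G.chi u → c = c' := by
    intro u hu c c' hc hc'
    by_contra hne'
    exact hu ⟨c, c', hc, hc', hne'⟩
  -- existence
  obtain ⟨v, hv⟩ := hne
  set P : ℕ → Prop := fun k => par^[k] v ∈ G.Vprec with hP
  set k₀ : ℕ := Nat.findGreatest P m with hk₀
  set ω : V := par^[k₀] v with hω
  have hωV : ω ∈ G.Vprec := Nat.findGreatest_spec (P := P) (Nat.zero_le m) hv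
  have hanc : ∀ j : ℕ, 1 ≤ j → par^[j] ω ∉ G.Vprec := by
    intro j hj
    have heq : par^[j] ω = par^[j + k₀] v := by
      rw [hω, ← Function.iterate_add_apply]
    rw [heq]
    by_cases hle : j + k₀ ≤ m
    · exact Nat.findGreatest_is_greatest (P := P) (by omega) hle
    · intro hmem
      have hv2 : v ∈ G.chiIter (j + k₀) G.Vprec := hdesc _ _ hmem
      have : v ∈ G.chiIter (j + k₀) G.Vprec ∩ G.Vprec := ⟨hv2, hv⟩
      rw [hm (j + k₀) (by omega)] at this
      exact this
  have hωprop : ∀ k : ℕ, 1 ≤ k → ∃! c : V, c ∈ G.chi (par^[k] ω) := by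
    intro k hk
    obtain ⟨k', rfl⟩ : ∃ k', k = k' + 1 := ⟨k - 1, by omega⟩
    have hchild : par^[k'] ω ∈ G.chi (par^[k' + 1] ω) := by
      show (par^[k' + 1] ω, par^[k'] ω) ∈ G.E
      rw [Function.iterate_succ_apply']
      exact hpar _
    exact ⟨par^[k'] ω, hchild, fun c hc => hone _ (hanc (k' + 1) (by omega)) c _ hc hchild⟩
  refine ⟨ω, ⟨hωV, hωprop⟩, ?_⟩
  -- uniqueness
  rintro ω' ⟨hω'V, hω'prop⟩
  -- common ancestor lemma
  have hcommon : ∃ k j : ℕ, par^[k] ω' = par^[j] ω := by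
    by_cases huv : ω' = ω
    · exact ⟨0, 0, by rw [huv]⟩
    obtain ⟨n, f, hn2, hf0, hfn, hadj⟩ := hconn ω' ω huv
    have key : ∀ i, i < n → ∃ k j : ℕ, par^[k] ω' = par^[j] (f i) := by
      intro i
      induction i with
      | zero => intro _; exact ⟨0, 0, by rw [hf0]⟩
      | succ i ih =>
        intro hi
        obtain ⟨k, j, hkj⟩ := ih (by omega)
        rcases hadj i (by omega) with hE | hE
        · -- (f i, f (i+1)) ∈ E, so f i = par (f (i+1))
          have : f i = par (f (i + 1)) := hparu _ _ hE
          exact ⟨k, j + 1, by rw [hkj, this, ← Function.iterate_succ_apply]⟩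
        · -- (f (i+1), f i) ∈ E, so f (i+1) = par (f i)
          have h2 : f (i + 1) = par (f i) := hparu _ _ hE
          refine ⟨k + 1, j, ?_⟩
          rw [Function.iterate_succ_apply', hkj, h2]
          exact (Function.iterate_succ_apply' par j (f i)).symm.trans
            (Function.iterate_succ_apply par j (f i))
      
    obtain ⟨k, j, hkj⟩ := key (n - 1) (by omega)
    exact ⟨k, j, by rw [hkj, hfn]⟩
  -- main reduction
  have main : ∀ k j : ℕ, par^[k] ω' = par^[j] ω → ω' = ω := by
    intro k
    induction k with
    | zero =>
      intro j h
      cases j with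
      | zero => exact h
      | succ j' =>
        exfalso
        obtain ⟨c, hc, hcu⟩ := hωprop (j' + 1) (by omega)
        obtain ⟨a, b, ha, hb, hab⟩ := hω'V
        rw [← h] at hc hcu
        exact hab ((hcu a ha).trans (hcu b hb).symm)
    | succ k ih =>
      intro j h
      cases j with
      | zero =>
        exfalso
        obtain ⟨c, hc, hcu⟩ := hω'prop (k + 1) (by omega)
        obtain ⟨a, b, ha, hb, hab⟩ := hωV
        rw [h] at hc hcu
        exact hab ((hcu a ha).trans (hcu b hb).symm)
      | succ j' =>
        have hc1 : par^[k] ω' ∈ G.chi (par^[k + 1] ω') := by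
          show (par^[k + 1] ω', par^[k] ω') ∈ G.E
          rw [Function.iterate_succ_apply']
          exact hpar _
        have hc2 : par^[j'] ω ∈ G.chi (par^[k + 1] ω') := by
          show (par^[k + 1] ω', par^[j'] ω) ∈ G.E
          rw [h, Function.iterate_succ_apply']
          exact hpar _
        obtain ⟨c, hc, hcu⟩ := hω'prop (k + 1) (by omega)
        exact ih j' ((hcu _ hc1).trans (hcu _ hc2).symm)
  obtain ⟨k, j, hkj⟩ := hcommon
  exact main k j hkj
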